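/- Let c₀ ∈ (0,1) be a real number such that 2·∑_{ν=1}^∞ c₀^{ν²/2} ≤ 1. Then for every complex q with 0 < |q| ≤ c₀, every integer k ≥ 1, and every z with |z| = |q|^{-k-1/2}, the partial theta function θ(q,z) = ∑_{j=0}^∞ q^{j(j+1)/2} z^j is nonzero. -/

import Mathlib

open Real Complex

set_option maxHeartbeats 800000

lemma gsum_aux (c₀ : ℝ) (hc0 : 0 < c₀) (hc1 : c₀ < 1) :
    Summable (fun ν : ℕ => c₀ ^ ((((ν : ℝ) + 1) ^ 2) / 2)) := by
  have ha1 : c₀ ^ ((1:ℝ)/2) < 1 := Real.rpow_lt_one hc0.le hc1 (by norm_num)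
  have ha0 : 0 ≤ c₀ ^ ((1:ℝ)/2) := (Real.rpow_pos_of_pos hc0 _).le
  have hgeo : Summable (fun n : ℕ => (c₀ ^ ((1:ℝ)/2)) ^ (n+1)) := by
    have := (summable_geometric_of_lt_one ha0 ha1).mul_left (c₀ ^ ((1:ℝ)/2))
    refine this.congr (fun n => ?_)
    rw [pow_succ']
  refine Summable.of_nonneg_of_le (fun n => (Real.rpow_pos_of_pos hc0 _).le) (fun n => ?_) hgeo
  have heq : (c₀ ^ ((1:ℝ)/2)) ^ (n+1) = c₀ ^ (((n:ℝ)+1)/2) := by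
    rw [← Real.rpow_natCast (c₀ ^ ((1:ℝ)/2)) (n+1), ← Real.rpow_mul hc0.le]
    push_cast; ring_nf
  rw [heq]
  apply Real.rpow_le_rpow_of_exponent_ge hc0 hc1.le
  nlinarith [sq_nonneg ((n:ℝ)+1), (by positivity : (0:ℝ) ≤ (n:ℝ))]

lemma Hsum_aux (c₀ : ℝ) (hc0 : 0 < c₀) (hc1 : c₀ < 1) (k : ℕ) :
    Summable (fun j : ℕ => c₀ ^ ((((j : ℝ) - k) ^ 2) / 2)) := by
  rw [← summable_nat_add_iff (k+1)]
  refine (gsum_aux c₀ hc0 hc1).congr (fun n => ?_)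
  congr 1
  push_cast
  ring

lemma norm_aux (q z : ℂ) (k j : ℕ) (hr0 : 0 < ‖q‖)
    (hz : ‖z‖ = (‖q‖) ^ (-(k : ℝ) - 1 / 2)) :
    ‖q ^ (j * (j + 1) / 2) * z ^ j‖
      = (‖q‖) ^ (-((k:ℝ)^2)/2) * (‖q‖) ^ ((((j:ℝ) - k) ^ 2) / 2) := by
  have hcast : ((j*(j+1)/2 : ℕ) : ℝ) = (j:ℝ)*((j:ℝ)+1)/2 := by
    rw [Nat.cast_div (Nat.even_mul_succ_self j).two_dvd (by norm_num)]; push_cast; ring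
  have h1 : ‖q ^ (j*(j+1)/2)‖ = (‖q‖) ^ (((j:ℝ)*((j:ℝ)+1)/2)) := by
    rw [norm_pow, ← Real.rpow_natCast (‖q‖) (j*(j+1)/2), hcast]
  have h2 : ‖z ^ j‖ = (‖q‖) ^ ((-(k:ℝ) - 1/2) * j) := by
    rw [norm_pow, hz, ← Real.rpow_natCast ((‖q‖) ^ (-(k:ℝ) - 1/2)) j,
      ← Real.rpow_mul hr0.le]
  rw [norm_mul, h1, h2, ← Real.rpow_add hr0, ← Real.rpow_add hr0]
  congr 1
  ring

theorem stmt2 (c₀ : ℝ) (hc0 : 0 < c₀) (hc1 : c₀ < 1)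
    (hc : 2 * (∑' ν : ℕ, c₀ ^ ((((ν : ℝ) + 1) ^ 2) / 2)) ≤ 1)
    (q : ℂ) (hq0 : 0 < ‖q‖) (hq : ‖q‖ ≤ c₀)
    (k : ℕ) (hk : 1 ≤ k) (z : ℂ)
    (hz : ‖z‖ = (‖q‖) ^ (-(k : ℝ) - 1 / 2)) :
    (∑' j : ℕ, q ^ (j * (j + 1) / 2) * z ^ j) ≠ 0 := by
  have hr0 : 0 < ‖q‖ := hq0
  have hr1 : ‖q‖ < 1 := lt_of_le_of_lt hq hc1
  have hgpos : ∀ ν : ℕ, (0:ℝ) < c₀ ^ ((((ν : ℝ) + 1) ^ 2) / 2) :=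
    fun ν => Real.rpow_pos_of_pos hc0 _
  have hgsum : Summable (fun ν : ℕ => c₀ ^ ((((ν : ℝ) + 1) ^ 2) / 2)) := gsum_aux c₀ hc0 hc1
  have hM0 : (0:ℝ) < (‖q‖) ^ (-((k:ℝ)^2)/2) := Real.rpow_pos_of_pos hr0 _
  have hHpos : ∀ j : ℕ, (0:ℝ) < c₀ ^ ((((j:ℝ) - k) ^ 2) / 2) :=
    fun j => Real.rpow_pos_of_pos hc0 _
  have hRH : ∀ j : ℕ, (‖q‖) ^ ((((j:ℝ) - k) ^ 2) / 2) ≤ c₀ ^ ((((j:ℝ) - k) ^ 2) / 2) :=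
    fun j => Real.rpow_le_rpow hr0.le hq (by positivity)
  have hnormle : ∀ j : ℕ, ‖q ^ (j * (j + 1) / 2) * z ^ j‖
      ≤ (‖q‖) ^ (-((k:ℝ)^2)/2) * c₀ ^ ((((j:ℝ) - k) ^ 2) / 2) := fun j => by
    rw [norm_aux q z k j hr0 hz]
    exact mul_le_mul_of_nonneg_left (hRH j) hM0.le
  have hHsum : Summable (fun j : ℕ => c₀ ^ ((((j:ℝ) - k) ^ 2) / 2)) := Hsum_aux c₀ hc0 hc1 k
  have hMHsum : Summable (fun j : ℕ =>
      (‖q‖) ^ (-((k:ℝ)^2)/2) * c₀ ^ ((((j:ℝ) - k) ^ 2) / 2)) := hHsum.mul_left _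
  have hfsum : Summable (fun j : ℕ => q ^ (j * (j + 1) / 2) * z ^ j) :=
    Summable.of_norm_bounded hMHsum hnormle
  have hfnormsum : Summable (fun j : ℕ => ‖q ^ (j * (j + 1) / 2) * z ^ j‖) :=
    Summable.of_nonneg_of_le (fun j => norm_nonneg _) hnormle hMHsum
  have hFsum : Summable (fun j : ℕ => if j = k then (0:ℝ) else c₀ ^ ((((j:ℝ) - k) ^ 2) / 2)) := by
    refine Summable.of_nonneg_of_le (fun j => ?_) (fun j => ?_) hHsum
    · by_cases h : j = k <;> simp [h, (hHpos j).le]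
    · by_cases h : j = k <;> simp [h, (hHpos j).le]
  have hFsum' : Summable (fun j : ℕ => if j = k then (0:ℝ) else ‖q ^ (j * (j + 1) / 2) * z ^ j‖) := by
    refine Summable.of_nonneg_of_le (fun j => ?_) (fun j => ?_) hfnormsum
    · by_cases h : j = k
      · simp [h]
      · simp only [if_neg h]; positivity
    · by_cases h : j = k
      · simp only [if_pos h]; positivity
      · simp only [if_neg h]; exact le_refl _
  -- key: ∑' ite H < 1
  have key : (∑' j : ℕ, if j = k then (0:ℝ) else c₀ ^ ((((j:ℝ) - k) ^ 2) / 2)) < 1 := by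
    have hsplit := Summable.sum_add_tsum_nat_add
      (f := fun j : ℕ => if j = k then (0:ℝ) else c₀ ^ ((((j:ℝ) - k) ^ 2) / 2)) (k+1) hFsum
    have htail : ∀ i : ℕ,
        (if i + (k+1) = k then (0:ℝ) else c₀ ^ (((((i + (k+1) : ℕ)):ℝ) - k) ^ 2 / 2))
          = c₀ ^ ((((i : ℝ) + 1) ^ 2) / 2) := by
      intro i
      rw [if_neg (by omega)]
      congr 1
      push_cast
      ring
    have hfin : (∑ i ∈ Finset.range (k+1),
        if i = k then (0:ℝ) else c₀ ^ ((((i:ℝ) - k) ^ 2) / 2))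
        = ∑ ν ∈ Finset.range k, c₀ ^ ((((ν : ℝ) + 1) ^ 2) / 2) := by
      rw [Finset.sum_range_succ, if_pos rfl, add_zero,
        ← Finset.sum_range_reflect (fun ν : ℕ => c₀ ^ ((((ν : ℝ) + 1) ^ 2) / 2)) k]
      refine Finset.sum_congr rfl (fun i hi => ?_)
      have hik : i < k := Finset.mem_range.mp hi
      rw [if_neg hik.ne]
      congr 1
      have h1 : ((k - 1 - i : ℕ) : ℝ) = (k:ℝ) - 1 - i := by
        push_cast [Nat.cast_sub (by omega : 1 ≤ k), Nat.cast_sub (by omega : i ≤ k - 1)]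
        ring
      rw [h1]
      ring
    have hfinlt : (∑ ν ∈ Finset.range k, c₀ ^ ((((ν : ℝ) + 1) ^ 2) / 2))
        < ∑' ν : ℕ, c₀ ^ ((((ν : ℝ) + 1) ^ 2) / 2) := by
      have h2 := Summable.sum_add_tsum_nat_add
        (f := fun ν : ℕ => c₀ ^ ((((ν : ℝ) + 1) ^ 2) / 2)) k hgsum
      have htp : 0 < ∑' i : ℕ, c₀ ^ (((((i + k : ℕ)):ℝ) + 1) ^ 2 / 2) :=
        Summable.tsum_pos ((summable_nat_add_iff k).mpr hgsum) (fun i => (hgpos _).le) 0 (hgpos _)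
      linarith
    rw [hfin, tsum_congr htail] at hsplit
    linarith
  -- assemble
  have hsplit := Summable.tsum_eq_add_tsum_ite hfsum k
  have hfk : ‖q ^ (k * (k + 1) / 2) * z ^ k‖ = (‖q‖) ^ (-((k:ℝ)^2)/2) := by
    rw [norm_aux q z k k hr0 hz]
    simp
  have hTbound : ‖∑' j : ℕ, if j = k then (0:ℂ) else q ^ (j * (j + 1) / 2) * z ^ j‖
      < (‖q‖) ^ (-((k:ℝ)^2)/2) := by
    calc ‖∑' j : ℕ, if j = k then (0:ℂ) else q ^ (j * (j + 1) / 2) * z ^ j‖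
        ≤ ∑' j : ℕ, ‖if j = k then (0:ℂ) else q ^ (j * (j + 1) / 2) * z ^ j‖ := by
          apply norm_tsum_le_tsum_norm
          refine Summable.of_nonneg_of_le (fun j => norm_nonneg _) (fun j => ?_) hfnormsum
          by_cases h : j = k
          · simp only [if_pos h, norm_zero]; positivity
          · simp only [if_neg h]; exact le_refl _
      _ = ∑' j : ℕ, if j = k then (0:ℝ) else ‖q ^ (j * (j + 1) / 2) * z ^ j‖ := by
          refine tsum_congr (fun j => ?_)
          by_cases h : j = k <;> simp [h]
      _ ≤ ∑' j : ℕ, (‖q‖) ^ (-((k:ℝ)^2)/2) *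
            (if j = k then (0:ℝ) else c₀ ^ ((((j:ℝ) - k) ^ 2) / 2)) := by
          refine Summable.tsum_le_tsum (fun j => ?_) hFsum' (hFsum.mul_left _)
          by_cases h : j = k
          · simp only [if_pos h, mul_zero, le_refl]
          · simp only [if_neg h]; exact hnormle j
      _ = (‖q‖) ^ (-((k:ℝ)^2)/2) *
            ∑' j : ℕ, (if j = k then (0:ℝ) else c₀ ^ ((((j:ℝ) - k) ^ 2) / 2)) := by
          rw [tsum_mul_left]
      _ < (‖q‖) ^ (-((k:ℝ)^2)/2) * 1 := mul_lt_mul_of_pos_left key hM0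
      _ = (‖q‖) ^ (-((k:ℝ)^2)/2) := mul_one _
  intro h0
  rw [hsplit] at h0
  have heq : q ^ (k * (k + 1) / 2) * z ^ k
      = -∑' j : ℕ, if j = k then (0:ℂ) else q ^ (j * (j + 1) / 2) * z ^ j := by
    linear_combination h0
  have hne := congrArg norm heq
  rw [hfk, norm_neg] at hne
  exact absurd hne (ne_of_gt hTbound)
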